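/- arXiv:2206.05954 — 2 statements merged into one kernel-verified Lean document; each statement's English description precedes it below -/
import Mathlib

section
/- Let d, T be positive integers, x_1, …, x_T ∈ ℝ^d, λ > 0, g(θ) = Σ_{s=1}^T σ(x_sᵀθ)·x_s + λθ, and A = Σ_{s=1}^T x_s x_sᵀ + λI. Let θ_1, θ_2 ∈ ℝ^d and suppose c ∈ (0, 1] satisfies σ′(x_sᵀ(θ_2 + u(θ_1 − θ_2))) ≥ c for all s ∈ {1,…,T} and all u ∈ [0,1]. Then for every x ∈ ℝ^d, |xᵀ(θ_1 − θ_2)| ≤ (1/c) · ‖x‖_{A^{−1}} · ‖g(θ_1) − g(θ_2)‖_{A^{−1}}. -/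
open Matrix

/-- The logistic (sigmoid) function `σ(z) = 1 / (1 + exp (-z))`. -/
noncomputable def logistic (z : ℝ) : ℝ := 1 / (1 + Real.exp (-z))

/-- The derivative `σ'` of the logistic function. -/
noncomputable def logistic' (z : ℝ) : ℝ := deriv logistic z

/-- The (semi-)norm `‖v‖_M = √(vᵀ M v)` induced by a matrix `M`. -/
noncomputable def mnorm {d : ℕ} (M : Matrix (Fin d) (Fin d) ℝ) (v : Fin d → ℝ) : ℝ :=
  Real.sqrt (v ⬝ᵥ M *ᵥ v)

lemma logistic_differentiable : Differentiable ℝ logistic := by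
  unfold logistic
  fun_prop (disch := intros; positivity)

lemma dsym {d : ℕ} (M : Matrix (Fin d) (Fin d) ℝ) (hM : M.IsHermitian) (u v : Fin d → ℝ) :
    u ⬝ᵥ M *ᵥ v = v ⬝ᵥ M *ᵥ u := by
  simp only [dotProduct, mulVec, Finset.mul_sum]
  rw [Finset.sum_comm]
  refine Finset.sum_congr rfl fun i _ => Finset.sum_congr rfl fun j _ => ?_
  have := hM.apply i j
  simp only [star_trivial] at this
  rw [← this]; ring

lemma cs {d : ℕ} (M : Matrix (Fin d) (Fin d) ℝ) (hM : M.PosSemidef) (a b : Fin d → ℝ) :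
    (a ⬝ᵥ M *ᵥ b) ^ 2 ≤ (a ⬝ᵥ M *ᵥ a) * (b ⬝ᵥ M *ᵥ b) := by
  have key : ∀ t : ℝ, 0 ≤ (b ⬝ᵥ M *ᵥ b) * (t * t) + (2 * (a ⬝ᵥ M *ᵥ b)) * t + (a ⬝ᵥ M *ᵥ a) := by
    intro t
    have h := hM.dotProduct_mulVec_nonneg (a + t • b)
    simp only [star_trivial] at h
    have hexp : (a + t • b) ⬝ᵥ M *ᵥ (a + t • b)
        = (b ⬝ᵥ M *ᵥ b) * (t * t) + (2 * (a ⬝ᵥ M *ᵥ b)) * t + (a ⬝ᵥ M *ᵥ a) := by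
      rw [mulVec_add, dotProduct_add, add_dotProduct, add_dotProduct, mulVec_smul,
        dotProduct_smul, smul_dotProduct, smul_dotProduct, dotProduct_smul,
        dsym M hM.isHermitian b a]
      simp only [smul_eq_mul]; ring
    linarith [hexp ▸ h]
  have := discrim_le_zero key
  simp only [discrim] at this
  nlinarith [this]

lemma dot_sum {ι : Type*} [Fintype ι] {d : ℕ} (v : Fin d → ℝ) (f : ι → Fin d → ℝ) :
    v ⬝ᵥ (∑ s, f s) = ∑ s, v ⬝ᵥ f s := by
  simp only [dotProduct, Finset.sum_apply, Finset.mul_sum]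
  rw [Finset.sum_comm]

lemma sum_mulVec' {ι : Type*} [Fintype ι] {d : ℕ} (N : ι → Matrix (Fin d) (Fin d) ℝ)
    (y : Fin d → ℝ) : (∑ s, N s) *ᵥ y = ∑ s, N s *ᵥ y := by
  ext i
  simp only [mulVec, dotProduct, Matrix.sum_apply, Finset.sum_apply, Finset.sum_mul]
  rw [Finset.sum_comm]

lemma dps_nonneg {d : ℕ} (v : Fin d → ℝ) : 0 ≤ v ⬝ᵥ v :=
  Finset.sum_nonneg fun i _ => mul_self_nonneg (v i)

lemma quad_vecMulVec {d : ℕ} (w y : Fin d → ℝ) :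
    y ⬝ᵥ (vecMulVec w w) *ᵥ y = (w ⬝ᵥ y) * (w ⬝ᵥ y) := by
  simp [dotProduct, mulVec, vecMulVec_apply, Finset.sum_mul, Finset.mul_sum]
  exact Finset.sum_congr rfl fun i _ => Finset.sum_congr rfl fun j _ => by ring

set_option maxHeartbeats 1000000 in
/-- If `c ∈ (0,1]` lower-bounds the derivative weights `σ'(x_sᵀ(θ₂ + u(θ₁-θ₂)))` on the
segment joining `θ₁` and `θ₂`, then for every `x`,
`|xᵀ(θ₁ - θ₂)| ≤ (1/c) ‖x‖_{A⁻¹} ‖g(θ₁) - g(θ₂)‖_{A⁻¹}`. -/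
theorem stmt_3 (d T : ℕ) (hd : 0 < d) (hT : 0 < T)
    (x : Fin T → (Fin d → ℝ)) (lam : ℝ) (hlam : 0 < lam)
    (g : (Fin d → ℝ) → (Fin d → ℝ))
    (hg : ∀ θ, g θ = (∑ s, logistic (x s ⬝ᵥ θ) • x s) + lam • θ)
    (A : Matrix (Fin d) (Fin d) ℝ)
    (hA : A = (∑ s, vecMulVec (x s) (x s)) + lam • (1 : Matrix (Fin d) (Fin d) ℝ))
    (θ1 θ2 : Fin d → ℝ) (c : ℝ) (hc0 : 0 < c) (hc1 : c ≤ 1)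
    (hderiv : ∀ s : Fin T, ∀ u ∈ Set.Icc (0:ℝ) 1,
      c ≤ logistic' (x s ⬝ᵥ (θ2 + u • (θ1 - θ2)))) :
    ∀ xv : Fin d → ℝ,
      |xv ⬝ᵥ (θ1 - θ2)| ≤ (1 / c) * mnorm A⁻¹ xv * mnorm A⁻¹ (g θ1 - g θ2) := by
  intro xv
  set Δ : Fin d → ℝ := θ1 - θ2 with hΔ
  set v : Fin d → ℝ := g θ1 - g θ2 with hv
  -- quadratic form of A
  have quadA : ∀ y : Fin d → ℝ, y ⬝ᵥ A *ᵥ y = (∑ s, (x s ⬝ᵥ y) * (x s ⬝ᵥ y)) + lam * (y ⬝ᵥ y) := by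
    intro y
    rw [hA, add_mulVec, dotProduct_add]
    congr 1
    · rw [sum_mulVec', dot_sum]
      exact Finset.sum_congr rfl fun s _ => quad_vecMulVec (x s) y
    · rw [smul_mulVec, one_mulVec, dotProduct_smul, smul_eq_mul]
  -- A is positive definite
  have hApd : A.PosDef := by
    refine PosDef.of_dotProduct_mulVec_pos ?_ ?_
    · refine IsHermitian.ext fun i j => ?_
      simp only [star_trivial, hA, Matrix.add_apply, Matrix.sum_apply, vecMulVec_apply,
        Matrix.smul_apply, Matrix.one_apply, smul_eq_mul]
      have h1 : (if j = i then (lam:ℝ) else 0) = (if i = j then lam else 0) := by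
        simp [eq_comm]
      have h2 : (∑ s, x s j * x s i) = ∑ s, x s i * x s j :=
        Finset.sum_congr rfl fun s _ => mul_comm _ _
      simp only [mul_ite, mul_one, mul_zero] at *
      rw [h1, h2]
    · intro y hy
      simp only [star_trivial]
      rw [quadA y]
      have h1 : 0 < y ⬝ᵥ y := by
        rcases (dps_nonneg y).lt_or_eq with h | h
        · exact h
        · exact absurd (dotProduct_self_eq_zero.mp h.symm) hy
      have h2 : (0:ℝ) ≤ ∑ s, (x s ⬝ᵥ y) * (x s ⬝ᵥ y) :=
        Finset.sum_nonneg fun s _ => mul_self_nonneg _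
      nlinarith
  have hAinvpd : A⁻¹.PosDef := hApd.inv
  have hdet : IsUnit A.det := isUnit_iff_ne_zero.mpr hApd.det_pos.ne'
  have hAiA : ∀ y : Fin d → ℝ, A⁻¹ *ᵥ A *ᵥ y = y := by
    intro y; rw [mulVec_mulVec, nonsing_inv_mul A hdet, one_mulVec]
  have hAAi : ∀ y : Fin d → ℝ, A *ᵥ A⁻¹ *ᵥ y = y := by
    intro y; rw [mulVec_mulVec, mul_nonsing_inv A hdet, one_mulVec]
  -- mean value theorem part
  have hinner : ∀ (s : Fin T) (u : ℝ), x s ⬝ᵥ (θ2 + u • Δ) = x s ⬝ᵥ θ2 + u * (x s ⬝ᵥ Δ) := by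
    intro s u; rw [dotProduct_add, dotProduct_smul, smul_eq_mul]
  set φ : ℝ → ℝ := fun u =>
    (∑ s, logistic (x s ⬝ᵥ θ2 + u * (x s ⬝ᵥ Δ)) * (x s ⬝ᵥ Δ))
      + lam * (Δ ⬝ᵥ θ2 + u * (Δ ⬝ᵥ Δ)) with hφdef
  set D : ℝ → ℝ := fun u =>
    (∑ s, logistic' (x s ⬝ᵥ θ2 + u * (x s ⬝ᵥ Δ)) * (x s ⬝ᵥ Δ) * (x s ⬝ᵥ Δ))
      + lam * (Δ ⬝ᵥ Δ) with hDdef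
  have hφval : ∀ u : ℝ, φ u = Δ ⬝ᵥ g (θ2 + u • Δ) := by
    intro u
    simp only [hφdef]
    rw [hg, dotProduct_add, dot_sum]
    congr 1
    · refine Finset.sum_congr rfl fun s _ => ?_
      rw [hinner s u, dotProduct_smul, smul_eq_mul, dotProduct_comm Δ (x s)]
    · rw [dotProduct_smul, smul_eq_mul, dotProduct_add, dotProduct_smul, smul_eq_mul]
  have hφderiv : ∀ u : ℝ, HasDerivAt φ (D u) u := by
    intro u
    have hin : ∀ s : Fin T, HasDerivAt (fun w : ℝ => x s ⬝ᵥ θ2 + w * (x s ⬝ᵥ Δ)) (x s ⬝ᵥ Δ) u :=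
      fun s => (hasDerivAt_mul_const (x s ⬝ᵥ Δ)).const_add (x s ⬝ᵥ θ2)
    have hsum : HasDerivAt (fun w => ∑ s, logistic (x s ⬝ᵥ θ2 + w * (x s ⬝ᵥ Δ)) * (x s ⬝ᵥ Δ))
        (∑ s, logistic' (x s ⬝ᵥ θ2 + u * (x s ⬝ᵥ Δ)) * (x s ⬝ᵥ Δ) * (x s ⬝ᵥ Δ)) u := by
      refine HasDerivAt.fun_sum fun s _ => ?_
      have houter : HasDerivAt logistic (logistic' (x s ⬝ᵥ θ2 + u * (x s ⬝ᵥ Δ)))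
          (x s ⬝ᵥ θ2 + u * (x s ⬝ᵥ Δ)) :=
        (logistic_differentiable _).hasDerivAt
      exact (houter.comp u (hin s)).mul_const _
    have hlin : HasDerivAt (fun w => lam * (Δ ⬝ᵥ θ2 + w * (Δ ⬝ᵥ Δ))) (lam * (Δ ⬝ᵥ Δ)) u :=
      ((hasDerivAt_mul_const (Δ ⬝ᵥ Δ)).const_add (Δ ⬝ᵥ θ2)).const_mul lam
    exact hsum.add hlin
  obtain ⟨u, hu, hueq⟩ := exists_hasDerivAt_eq_slope φ D one_pos
    (fun w _ => (hφderiv w).continuousAt.continuousWithinAt)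
    (fun w _ => hφderiv w)
  have hslope : D u = Δ ⬝ᵥ v := by
    rw [hueq]
    have hθ1 : θ2 + (1:ℝ) • Δ = θ1 := by rw [one_smul, hΔ]; abel
    have hθ2 : θ2 + (0:ℝ) • Δ = θ2 := by rw [zero_smul, add_zero]
    have h1 : φ 1 = Δ ⬝ᵥ g θ1 := by rw [hφval, hθ1]
    have h0 : φ 0 = Δ ⬝ᵥ g θ2 := by rw [hφval, hθ2]
    rw [h1, h0, hv, dotProduct_sub]
    norm_num
  -- lower bound on D u
  set q : ℝ := Δ ⬝ᵥ A *ᵥ Δ with hq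
  have hq0 : 0 ≤ q := by
    rw [hq, quadA]
    have := Finset.sum_nonneg (fun s (_ : s ∈ Finset.univ) => mul_self_nonneg (x s ⬝ᵥ Δ))
    nlinarith [dps_nonneg Δ]
  have hlow : c * q ≤ Δ ⬝ᵥ v := by
    rw [← hslope, hq, quadA]
    simp only [hDdef]
    have hterm : ∀ s : Fin T, c * ((x s ⬝ᵥ Δ) * (x s ⬝ᵥ Δ))
        ≤ logistic' (x s ⬝ᵥ θ2 + u * (x s ⬝ᵥ Δ)) * (x s ⬝ᵥ Δ) * (x s ⬝ᵥ Δ) := by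
      intro s
      have hc := hderiv s u ⟨hu.1.le, hu.2.le⟩
      rw [hinner s u] at hc
      nlinarith [mul_self_nonneg (x s ⬝ᵥ Δ)]
    have hsum := Finset.sum_le_sum fun s (_ : s ∈ Finset.univ) => hterm s
    rw [← Finset.mul_sum] at hsum
    have hdd : 0 ≤ Δ ⬝ᵥ Δ := dps_nonneg Δ
    simp only [mul_add]
    nlinarith [mul_nonneg (mul_nonneg (sub_nonneg.mpr hc1) hlam.le) hdd]
  -- Cauchy-Schwarz applications
  have hcs1 := cs A⁻¹ hAinvpd.posSemidef xv (A *ᵥ Δ)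
  have hcs2 := cs A⁻¹ hAinvpd.posSemidef (A *ᵥ Δ) v
  have e1 : xv ⬝ᵥ A⁻¹ *ᵥ A *ᵥ Δ = xv ⬝ᵥ Δ := by rw [hAiA]
  have e2 : (A *ᵥ Δ) ⬝ᵥ A⁻¹ *ᵥ A *ᵥ Δ = q := by
    rw [hAiA, hq, dotProduct_comm]
  have e3 : (A *ᵥ Δ) ⬝ᵥ A⁻¹ *ᵥ v = Δ ⬝ᵥ v := by
    rw [dotProduct_comm, ← dsym A hApd.isHermitian, hAAi]
  rw [e1, e2] at hcs1
  rw [e2, e3] at hcs2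
  -- norms
  have hnx : mnorm A⁻¹ xv ^ 2 = xv ⬝ᵥ A⁻¹ *ᵥ xv := Real.sq_sqrt (by
    have := hAinvpd.posSemidef.dotProduct_mulVec_nonneg xv
    simpa using this)
  have hnv : mnorm A⁻¹ v ^ 2 = v ⬝ᵥ A⁻¹ *ᵥ v := Real.sq_sqrt (by
    have := hAinvpd.posSemidef.dotProduct_mulVec_nonneg v
    simpa using this)
  have hnx0 : 0 ≤ mnorm A⁻¹ xv := Real.sqrt_nonneg _
  have hnv0 : 0 ≤ mnorm A⁻¹ v := Real.sqrt_nonneg _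
  set sq : ℝ := Real.sqrt q with hsq
  have hsq0 : 0 ≤ sq := Real.sqrt_nonneg _
  have hsqq : sq ^ 2 = q := Real.sq_sqrt hq0
  -- |xv ⬝ᵥ Δ| ≤ nx * sq
  have h1 : |xv ⬝ᵥ Δ| ≤ mnorm A⁻¹ xv * sq := by
    have hle : (xv ⬝ᵥ Δ) ^ 2 ≤ (mnorm A⁻¹ xv * sq) ^ 2 := by
      rw [mul_pow, hnx, hsqq]; exact hcs1
    calc |xv ⬝ᵥ Δ| = Real.sqrt ((xv ⬝ᵥ Δ) ^ 2) := (Real.sqrt_sq_eq_abs _).symm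
      _ ≤ Real.sqrt ((mnorm A⁻¹ xv * sq) ^ 2) := Real.sqrt_le_sqrt hle
      _ = mnorm A⁻¹ xv * sq := Real.sqrt_sq (mul_nonneg hnx0 hsq0)
  -- Δ ⬝ᵥ v ≤ sq * nv
  have h2 : Δ ⬝ᵥ v ≤ sq * mnorm A⁻¹ v := by
    have hle : (Δ ⬝ᵥ v) ^ 2 ≤ (sq * mnorm A⁻¹ v) ^ 2 := by
      rw [mul_pow, hsqq, hnv]; exact hcs2
    calc Δ ⬝ᵥ v ≤ |Δ ⬝ᵥ v| := le_abs_self _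
      _ = Real.sqrt ((Δ ⬝ᵥ v) ^ 2) := (Real.sqrt_sq_eq_abs _).symm
      _ ≤ Real.sqrt ((sq * mnorm A⁻¹ v) ^ 2) := Real.sqrt_le_sqrt hle
      _ = sq * mnorm A⁻¹ v := Real.sqrt_sq (mul_nonneg hsq0 hnv0)
  -- sq ≤ (1/c) * nv
  have h3 : c * sq ≤ mnorm A⁻¹ v := by
    rcases eq_or_lt_of_le hsq0 with h | h
    · rw [← h, mul_zero]; exact hnv0
    · have : c * sq * sq ≤ sq * mnorm A⁻¹ v := by nlinarith
      exact le_of_mul_le_mul_right (by nlinarith) h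
  calc |xv ⬝ᵥ Δ| ≤ mnorm A⁻¹ xv * sq := h1
    _ ≤ mnorm A⁻¹ xv * ((1/c) * mnorm A⁻¹ v) := by
        refine mul_le_mul_of_nonneg_left ?_ hnx0
        nlinarith [h3, one_div_pos.mpr hc0, mul_one_div_cancel hc0.ne']
    _ = (1 / c) * mnorm A⁻¹ xv * mnorm A⁻¹ v := by ring
end

section
/- (Sufficient ensemble size for optimism.) Let τ > 0, β ≥ 1, δ ∈ (0,1), and set p = exp(−β²)/(4·√π·β), so that 0 < p < 1. Let U_1, …, U_N be independent, identically distributed N(0, τ²) random variables. If N ≥ log(δ) / log(1 − p), then P( max_{1 ≤ n ≤ N} U_n ≥ β·τ ) ≥ 1 − δ. -/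
open MeasureTheory ProbabilityTheory Set

lemma num_core (sπ s2 E c e β : ℝ) (hsπ : 0 < sπ) (hs2 : 0 < s2) (hs22 : s2 ^ 2 = 2)
    (hE : 0 < E) (hc : 0 < c) (hEce : E ≤ c * e) (he : e ^ 2 < 8) (he0 : 0 < e)
    (hβ0 : 0 < β) :
    E ^ 2 / (4 * sπ * β) ≤ β⁻¹ * (s2 * sπ)⁻¹ * (E * c) := by
  have hes2 : e * s2 ≤ 4 := by
    nlinarith [mul_lt_mul_of_pos_right he (by positivity : (0:ℝ) < s2 ^ 2),
      sq_nonneg (e * s2 - 4)]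
  have h1 : E * s2 ≤ 4 * c := by nlinarith [mul_le_mul_of_nonneg_right hEce hs2.le]
  have hrhs : β⁻¹ * (s2 * sπ)⁻¹ * (E * c) = E * c / (β * (s2 * sπ)) := by
    field_simp
  rw [hrhs, div_le_div_iff₀ (by positivity) (by positivity)]
  nlinarith [mul_le_mul_of_nonneg_right h1 (by positivity : (0:ℝ) ≤ E * β * sπ)]

lemma gauss_tail (τ β : ℝ) (hτ : 0 < τ) (hβ : 1 ≤ β) :
    Real.exp (-β ^ 2) / (4 * Real.sqrt Real.pi * β) ≤
      ∫ x in Set.Ici (β * τ), gaussianPDFReal 0 (Real.toNNReal (τ ^ 2)) x := by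
  have hβ0 : 0 < β := lt_of_lt_of_le one_pos hβ
  set v : NNReal := Real.toNNReal (τ ^ 2) with hvdef
  have hvc : (v : ℝ) = τ ^ 2 := Real.coe_toNNReal _ (sq_nonneg τ)
  set f := gaussianPDFReal 0 v with hf
  set a := β * τ with ha
  set b := (β + β⁻¹) * τ with hb
  have ha0 : 0 < a := mul_pos hβ0 hτ
  have hβi0 : 0 < β⁻¹ := inv_pos.2 hβ0
  have hab : a ≤ b := by
    rw [ha, hb]; nlinarith [mul_pos hβi0 hτ]
  have hnonneg : ∀ x, 0 ≤ f x := gaussianPDFReal_nonneg 0 v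
  have h1 : ∫ x in Set.Icc a b, f x ≤ ∫ x in Set.Ici a, f x :=
    setIntegral_mono_set (integrable_gaussianPDFReal 0 v).integrableOn
      (ae_of_all _ hnonneg)
      (HasSubset.Subset.eventuallyLE Set.Icc_subset_Ici_self)
  have h2v : 0 < 2 * (v : ℝ) := by rw [hvc]; positivity
  have hpt : ∀ x ∈ Set.Icc a b, f b ≤ f x := by
    intro x hx
    simp only [hf, gaussianPDFReal, sub_zero]
    have harg : -b ^ 2 / (2 * (v:ℝ)) ≤ -x ^ 2 / (2 * (v:ℝ)) := by
      rw [div_le_div_iff₀ h2v h2v]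
      have hx2 : x ^ 2 ≤ b ^ 2 := by nlinarith [hx.1, hx.2, ha0]
      nlinarith [mul_le_mul_of_nonneg_right hx2 h2v.le]
    exact mul_le_mul_of_nonneg_left (Real.exp_le_exp.2 harg)
      (inv_nonneg.2 (Real.sqrt_nonneg _))
  have h2 : (b - a) * f b ≤ ∫ x in Set.Icc a b, f x := by
    have hk := setIntegral_mono_on (integrableOn_const measure_Icc_lt_top.ne)
      (integrable_gaussianPDFReal 0 v).integrableOn measurableSet_Icc hpt
    rwa [setIntegral_const, Real.volume_real_Icc_of_le hab,
      smul_eq_mul] at hk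
  refine le_trans ?_ (le_trans h2 h1)
  have hba : b - a = β⁻¹ * τ := by rw [ha, hb]; ring
  have hfb : f b = (Real.sqrt 2 * Real.sqrt Real.pi * τ)⁻¹
      * Real.exp (-(β + β⁻¹) ^ 2 / 2) := by
    simp only [hf, gaussianPDFReal, sub_zero]
    rw [hvc]
    congr 1
    · rw [show 2 * Real.pi * τ ^ 2 = 2 * (Real.pi * τ ^ 2) by ring,
        Real.sqrt_mul (by norm_num), Real.sqrt_mul Real.pi_pos.le, Real.sqrt_sq hτ.le]
      ring
    · congr 1
      rw [hb]
      field_simp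
  rw [hba, hfb]
  have hgoal : β⁻¹ * τ * ((Real.sqrt 2 * Real.sqrt Real.pi * τ)⁻¹
      * Real.exp (-(β + β⁻¹) ^ 2 / 2))
      = β⁻¹ * (Real.sqrt 2 * Real.sqrt Real.pi)⁻¹ * Real.exp (-(β + β⁻¹) ^ 2 / 2) := by
    field_simp
  rw [hgoal]
  have hsπ : 0 < Real.sqrt Real.pi := Real.sqrt_pos.2 Real.pi_pos
  have hs2 : 0 < Real.sqrt 2 := by positivity
  have hββ : β * β⁻¹ = 1 := mul_inv_cancel₀ hβ0.ne'
  have hβi : β⁻¹ ≤ 1 := inv_le_one_of_one_le₀ hβ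
  have hA : Real.exp (-β ^ 2 / 2) * Real.exp (-(3:ℝ) / 2)
      ≤ Real.exp (-(β + β⁻¹) ^ 2 / 2) := by
    rw [← Real.exp_add]
    apply Real.exp_le_exp.2
    nlinarith [sq_nonneg β⁻¹]
  have hE2 : Real.exp (-β ^ 2) = Real.exp (-β ^ 2 / 2) ^ 2 := by
    rw [← Real.exp_nat_mul]
    congr 1
    push_cast
    ring
  have hEle : Real.exp (-β ^ 2 / 2) ≤ Real.exp (-(3:ℝ) / 2) * Real.exp 1 := by
    rw [← Real.exp_add]
    apply Real.exp_le_exp.2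
    nlinarith
  have he : Real.exp 1 ^ 2 < 8 := by
    nlinarith [Real.exp_one_lt_d9, Real.exp_pos 1]
  have key := num_core (Real.sqrt Real.pi) (Real.sqrt 2) (Real.exp (-β ^ 2 / 2))
    (Real.exp (-(3:ℝ) / 2)) (Real.exp 1) β hsπ hs2 (Real.sq_sqrt (by norm_num))
    (Real.exp_pos _) (Real.exp_pos _) hEle he (Real.exp_pos _) hβ0
  rw [hE2]
  refine le_trans key ?_
  apply mul_le_mul_of_nonneg_left hA
  positivity

/-- Sufficient ensemble size for optimism: with `p = exp(-β²)/(4√π β)` (so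
`0 < p < 1`), if `U_1, …, U_N` are i.i.d. `N(0, τ²)` and
`N ≥ log δ / log (1 - p)`, then `P(max_n U_n ≥ β τ) ≥ 1 - δ`. -/
theorem stmt_7 {Ω : Type*} {m0 : MeasurableSpace Ω}
    (P : Measure Ω) [IsProbabilityMeasure P]
    (τ β δ : ℝ) (hτ : 0 < τ) (hβ : 1 ≤ β) (hδ : δ ∈ Set.Ioo (0:ℝ) 1)
    (p : ℝ) (hp : p = Real.exp (-β ^ 2) / (4 * Real.sqrt Real.pi * β))
    (N : ℕ) (U : Fin N → Ω → ℝ)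
    (hindep : iIndepFun U P)
    (hgauss : ∀ n : Fin N,
      Measure.map (U n) P = gaussianReal 0 (Real.toNNReal (τ ^ 2)))
    (hN : Real.log δ / Real.log (1 - p) ≤ (N : ℝ)) :
    0 < p ∧ p < 1 ∧
      ENNReal.ofReal (1 - δ) ≤ P {ω | ∃ n : Fin N, β * τ ≤ U n ω} := by
  have hβ0 : 0 < β := lt_of_lt_of_le one_pos hβ
  have hsπ1 : (1:ℝ) ≤ Real.sqrt Real.pi := by
    rw [show (1:ℝ) = Real.sqrt 1 by simp]
    exact Real.sqrt_le_sqrt (by nlinarith [Real.pi_gt_three])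
  have hden : (1:ℝ) < 4 * Real.sqrt Real.pi * β := by nlinarith
  have hp0 : 0 < p := by
    rw [hp]; exact div_pos (Real.exp_pos _) (by linarith)
  have hp1 : p < 1 := by
    rw [hp, div_lt_one (by linarith)]
    have h1 : Real.exp (-β ^ 2) < 1 := Real.exp_lt_one_iff.2 (by nlinarith)
    linarith
  refine ⟨hp0, hp1, ?_⟩
  -- basic facts
  have hδ0 := hδ.1
  have hδ1 := hδ.2
  have hv : Real.toNNReal (τ ^ 2) ≠ 0 := by
    simp only [ne_eq, Real.toNNReal_eq_zero, not_le]
    positivity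
  have hmeas : ∀ n, AEMeasurable (U n) P := by
    intro n
    by_contra h
    have h0 := Measure.map_of_not_aemeasurable h
    rw [hgauss n] at h0
    have : (gaussianReal 0 (Real.toNNReal (τ ^ 2))) Set.univ = 0 := by rw [h0]; rfl
    simp at this
  -- tail bound for each coordinate
  have hIci : ∀ n, ENNReal.ofReal p ≤ P (U n ⁻¹' Set.Ici (β * τ)) := by
    intro n
    rw [← Measure.map_apply_of_aemeasurable (hmeas n) measurableSet_Ici, hgauss n,
      gaussianReal_apply_eq_integral 0 hv]
    exact ENNReal.ofReal_le_ofReal (hp ▸ gauss_tail τ β hτ hβ)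
  have hIio : ∀ n, P (U n ⁻¹' Set.Iio (β * τ)) ≤ ENNReal.ofReal (1 - p) := by
    intro n
    rw [← Measure.map_apply_of_aemeasurable (hmeas n) measurableSet_Iio, hgauss n]
    have hc : Set.Iio (β * τ) = (Set.Ici (β * τ))ᶜ := Set.compl_Ici.symm
    rw [hc, prob_compl_eq_one_sub measurableSet_Ici]
    have this : ENNReal.ofReal p
        ≤ (gaussianReal 0 (Real.toNNReal (τ ^ 2))) (Set.Ici (β * τ)) := by
      rw [← hgauss n, Measure.map_apply_of_aemeasurable (hmeas n) measurableSet_Ici]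
      exact hIci n
    calc 1 - (gaussianReal 0 (Real.toNNReal (τ ^ 2))) (Set.Ici (β * τ))
        ≤ 1 - ENNReal.ofReal p := tsub_le_tsub_left this 1
      _ = ENNReal.ofReal (1 - p) := by
          rw [ENNReal.ofReal_sub 1 hp0.le, ENNReal.ofReal_one]
  -- independence product bound
  have hprod : P (⋂ n, U n ⁻¹' Set.Iio (β * τ)) ≤ ENNReal.ofReal δ := by
    rw [hindep.meas_iInter (fun n => ⟨Set.Iio (β * τ), measurableSet_Iio, rfl⟩)]
    calc ∏ n : Fin N, P (U n ⁻¹' Set.Iio (β * τ))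
        ≤ ∏ _n : Fin N, ENNReal.ofReal (1 - p) :=
          Finset.prod_le_prod' fun n _ => hIio n
      _ = ENNReal.ofReal (1 - p) ^ N := by
          rw [Finset.prod_const, Finset.card_univ, Fintype.card_fin]
      _ = ENNReal.ofReal ((1 - p) ^ N) := (ENNReal.ofReal_pow (by linarith) N).symm
      _ ≤ ENNReal.ofReal δ := by
          apply ENNReal.ofReal_le_ofReal
          have hlp : Real.log (1 - p) < 0 := Real.log_neg (by linarith) (by linarith)
          have hNl : (N : ℝ) * Real.log (1 - p) ≤ Real.log δ :=
            (div_le_iff_of_neg hlp).1 hN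
          calc (1 - p) ^ N = Real.exp (Real.log (1 - p)) ^ N := by
                rw [Real.exp_log (by linarith)]
            _ = Real.exp ((N : ℝ) * Real.log (1 - p)) := by
                rw [← Real.exp_nat_mul]
            _ ≤ Real.exp (Real.log δ) := Real.exp_le_exp.2 hNl
            _ = δ := Real.exp_log hδ0
  -- conclude
  have hcover : (Set.univ : Set Ω) ⊆
      {ω | ∃ n : Fin N, β * τ ≤ U n ω} ∪ ⋂ n, U n ⁻¹' Set.Iio (β * τ) := by
    intro ω _
    by_cases h : ∃ n : Fin N, β * τ ≤ U n ω
    · exact Or.inl h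
    · push_neg at h
      exact Or.inr (Set.mem_iInter.2 fun n => h n)
  have h1 : (1 : ENNReal) ≤ P {ω | ∃ n : Fin N, β * τ ≤ U n ω}
      + P (⋂ n, U n ⁻¹' Set.Iio (β * τ)) := by
    calc (1 : ENNReal) = P Set.univ := (measure_univ).symm
      _ ≤ P ({ω | ∃ n : Fin N, β * τ ≤ U n ω} ∪ ⋂ n, U n ⁻¹' Set.Iio (β * τ)) :=
          measure_mono hcover
      _ ≤ _ := measure_union_le _ _
  have h2 : (1 : ENNReal) ≤ P {ω | ∃ n : Fin N, β * τ ≤ U n ω} + ENNReal.ofReal δ :=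
    h1.trans (add_le_add_right hprod _)
  have h3 : ENNReal.ofReal (1 - δ) = 1 - ENNReal.ofReal δ := by
    rw [ENNReal.ofReal_sub 1 hδ0.le, ENNReal.ofReal_one]
  rw [h3]
  exact tsub_le_iff_right.2 h2
end
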